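/- (Corollary on E_ab⁻¹ and the constant function.) (i) E_ab⁻¹ applied to the constant function 1 is independent of A and equals B/⟨B⟩: for every x ∈ α, (E_ab⁻¹ 1)(x) = B(x)/⟨B⟩. (ii) The integral of E_ab⁻¹ h is independent of B: for every integrable h, ∫ (E_ab⁻¹ h) dμ = (1/⟨A⟩) · ∫ A·h dμ. (iii) ∫ (E_ab⁻¹ 1) dμ = V, independent of both A and B. -/

import Mathlib

open MeasureTheory

/-- Total (coordinate) volume `V := μ(α)` as a real number. -/
noncomputable def totalVol {α : Type*} [MeasurableSpace α] (μ : Measure α) : ℝ :=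
  (μ Set.univ).toReal

/-- Spatial average `⟨f⟩ := (1/V) ∫ f dμ`. -/
noncomputable def avg {α : Type*} [MeasurableSpace α] (μ : Measure α) (f : α → ℝ) : ℝ :=
  (totalVol μ)⁻¹ * ∫ x, f x ∂μ

/-- The generalized delocalization operator `E_ab`:
`(E_ab f)(x) = ⟨f⟩ + A(x)⁻¹·(B(x)⁻¹·f(x) − ⟨B⁻¹·f⟩)`. -/
noncomputable def opEab {α : Type*} [MeasurableSpace α] (μ : Measure α) (A B : α → ℝ)
    (f : α → ℝ) : α → ℝ :=
  fun x => avg μ f + (A x)⁻¹ * ((B x)⁻¹ * f x - avg μ (fun y => (B y)⁻¹ * f y))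

/-- The operator `E_ab⁻¹`:
`(E_ab⁻¹ h)(x) = B(x)·A(x)·h(x) − B(x)·A(x)·(∫A·h)/(∫A) − B(x)·(∫B·A·h)/(∫B)
  + B(x)·((V + ∫B·A)/(∫B))·(∫A·h)/(∫A)`. -/
noncomputable def opEabInv {α : Type*} [MeasurableSpace α] (μ : Measure α) (A B : α → ℝ)
    (h : α → ℝ) : α → ℝ :=
  fun x => B x * A x * h x
    - B x * A x * (∫ y, A y * h y ∂μ) / (∫ y, A y ∂μ)
    - B x * (∫ y, B y * A y * h y ∂μ) / (∫ y, B y ∂μ)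
    + B x * ((totalVol μ + ∫ y, B y * A y ∂μ) / (∫ y, B y ∂μ))
        * (∫ y, A y * h y ∂μ) / (∫ y, A y ∂μ)

/-- Corollary on `E_ab⁻¹` and the constant function.
(i) `(E_ab⁻¹ 1)(x) = B(x)/⟨B⟩` for every `x` (independent of `A`);
(ii) `∫ (E_ab⁻¹ h) dμ = (1/⟨A⟩)·∫ A·h dμ` for every integrable `h` (independent of `B`);
(iii) `∫ (E_ab⁻¹ 1) dμ = V` (independent of both `A` and `B`). -/
theorem opEabInv_constant_actions
    {α : Type*} [MeasurableSpace α] (μ : Measure α) [IsFiniteMeasure μ]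
    (hV : 0 < totalVol μ)
    (A B : α → ℝ) (hA : Measurable A) (hB : Measurable B)
    (c C : ℝ) (hc : 0 < c) (hcC : c ≤ C)
    (hboundA : ∀ x, c ≤ A x ∧ A x ≤ C) (hboundB : ∀ x, c ≤ B x ∧ B x ≤ C) :
    (∀ x, opEabInv μ A B (fun _ => (1 : ℝ)) x = B x / avg μ B) ∧
    (∀ h : α → ℝ, Integrable h μ →
      ∫ x, opEabInv μ A B h x ∂μ = (avg μ A)⁻¹ * ∫ x, A x * h x ∂μ) ∧
    (∫ x, opEabInv μ A B (fun _ => (1 : ℝ)) x ∂μ = totalVol μ) := by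
  have hCpos : 0 < C := lt_of_lt_of_le hc hcC
  -- boundedness norms
  have hAbound : ∀ x, ‖A x‖ ≤ C := fun x => by
    rw [Real.norm_eq_abs, abs_of_pos (lt_of_lt_of_le hc (hboundA x).1)]
    exact (hboundA x).2
  have hBbound : ∀ x, ‖B x‖ ≤ C := fun x => by
    rw [Real.norm_eq_abs, abs_of_pos (lt_of_lt_of_le hc (hboundB x).1)]
    exact (hboundB x).2
  have hAint : Integrable A μ :=
    (integrable_const C).mono' hA.aestronglyMeasurable (Filter.Eventually.of_forall hAbound)
  have hBint : Integrable B μ :=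
    (integrable_const C).mono' hB.aestronglyMeasurable (Filter.Eventually.of_forall hBbound)
  have hAh : ∀ h : α → ℝ, Integrable h μ → Integrable (fun x => A x * h x) μ :=
    fun h hh => hh.bdd_mul hA.aestronglyMeasurable (Filter.Eventually.of_forall hAbound)
  have hBAh : ∀ h : α → ℝ, Integrable h μ → Integrable (fun x => B x * A x * h x) μ := by
    intro h hh
    have := (hAh h hh).bdd_mul hB.aestronglyMeasurable (Filter.Eventually.of_forall hBbound)
    simpa [mul_assoc] using this
  -- positivity of integrals
  have hIA : 0 < ∫ x, A x ∂μ := by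
    have : (0:ℝ) < ∫ _x, c ∂μ := by
      rw [integral_const]; exact mul_pos hV hc
    exact lt_of_lt_of_le this (integral_mono (integrable_const c) hAint fun x => (hboundA x).1)
  have hIB : 0 < ∫ x, B x ∂μ := by
    have : (0:ℝ) < ∫ _x, c ∂μ := by
      rw [integral_const]; exact mul_pos hV hc
    exact lt_of_lt_of_le this (integral_mono (integrable_const c) hBint fun x => (hboundB x).1)
  have hIA' : (∫ x, A x ∂μ) ≠ 0 := ne_of_gt hIA
  have hIB' : (∫ x, B x ∂μ) ≠ 0 := ne_of_gt hIB
  have hV' : totalVol μ ≠ 0 := ne_of_gt hV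
  -- part (i)
  have part1 : ∀ x, opEabInv μ A B (fun _ => (1 : ℝ)) x = B x / avg μ B := by
    intro x
    simp only [opEabInv, avg, mul_one]
    field_simp
    ring
  -- part (ii)
  have part2 : ∀ h : α → ℝ, Integrable h μ →
      ∫ x, opEabInv μ A B h x ∂μ = (avg μ A)⁻¹ * ∫ x, A x * h x ∂μ := by
    intro h hh
    have hBA : Integrable (fun x => B x * A x) μ := by
      simpa using hBAh (fun _ => (1:ℝ)) (integrable_const 1)
    have i1 : Integrable (fun x => B x * A x * h x) μ := hBAh h hh
    have i2 : Integrable (fun x => B x * A x * (∫ y, A y * h y ∂μ) / (∫ y, A y ∂μ)) μ := by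
      simpa [mul_div_assoc] using hBA.mul_const ((∫ y, A y * h y ∂μ) / (∫ y, A y ∂μ))
    have i3 : Integrable (fun x => B x * (∫ y, B y * A y * h y ∂μ) / (∫ y, B y ∂μ)) μ := by
      simpa [mul_div_assoc] using hBint.mul_const ((∫ y, B y * A y * h y ∂μ) / (∫ y, B y ∂μ))
    have i4 : Integrable (fun x => B x * ((totalVol μ + ∫ y, B y * A y ∂μ) / (∫ y, B y ∂μ))
        * (∫ y, A y * h y ∂μ) / (∫ y, A y ∂μ)) μ := by
      simpa [mul_div_assoc, mul_assoc] using hBint.mul_const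
        (((totalVol μ + ∫ y, B y * A y ∂μ) / (∫ y, B y ∂μ))
          * ((∫ y, A y * h y ∂μ) / (∫ y, A y ∂μ)))
    have expand : ∫ x, opEabInv μ A B h x ∂μ =
        (∫ x, B x * A x * h x ∂μ)
        - (∫ x, B x * A x * (∫ y, A y * h y ∂μ) / (∫ y, A y ∂μ) ∂μ)
        - (∫ x, B x * (∫ y, B y * A y * h y ∂μ) / (∫ y, B y ∂μ) ∂μ)
        + (∫ x, B x * ((totalVol μ + ∫ y, B y * A y ∂μ) / (∫ y, B y ∂μ))
            * (∫ y, A y * h y ∂μ) / (∫ y, A y ∂μ) ∂μ) := by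
      have i12 : Integrable (fun x => B x * A x * h x
          - B x * A x * (∫ y, A y * h y ∂μ) / (∫ y, A y ∂μ)) μ := i1.sub i2
      have i123 : Integrable (fun x => B x * A x * h x
          - B x * A x * (∫ y, A y * h y ∂μ) / (∫ y, A y ∂μ)
          - B x * (∫ y, B y * A y * h y ∂μ) / (∫ y, B y ∂μ)) μ := i12.sub i3
      simp only [opEabInv]
      rw [integral_add i123 i4, integral_sub i12 i3, integral_sub i1 i2]
    rw [expand]
    simp only [mul_div_assoc]
    simp only [integral_mul_const, avg]
    field_simp
    ring
  refine ⟨part1, part2, ?_⟩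
  rw [part2 (fun _ => (1:ℝ)) (integrable_const 1)]
  simp only [mul_one, avg]
  field_simp
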